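/- arXiv:1904.10515 — 4 statements merged into one kernel-verified Lean document; each statement's English description precedes it below -/
import Mathlib

section
/- Let Φ(t) = e^{|t|} − |t| − 1 and Ψ(t) = (1+|t|)·log(1+|t|) − |t|. If f ∈ L^Ψ and x is an L^Ψ-point of f, then Σ_{k=0}^{n} ( Ψ′(1/(k+1)) / (k+1)^{1/2} ) · Ψ( w_x f(π(k+1)/(n+1))_Ψ ) + (n+1) Ψ(1/(n+1)) Ψ( w_x f(π)_Ψ ) → 0 as n → ∞. -/
open Real MeasureTheory Filter Set



lemma aux_sum (c : ℕ → ℝ) (a : ℕ → ℕ → ℝ) (M : ℝ)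
    (hc : Summable c) (hc0 : ∀ k, 0 ≤ c k)
    (ha0 : ∀ n k, k ≤ n → 0 ≤ a n k) (haM : ∀ n k, k ≤ n → a n k ≤ M)
    (hak : ∀ k, Filter.Tendsto (fun n => a n k) Filter.atTop (nhds 0)) :
    Filter.Tendsto (fun n => ∑ k ∈ Finset.range (n + 1), c k * a n k)
      Filter.atTop (nhds 0) := by
  have hM : 0 ≤ M := le_trans (ha0 0 0 le_rfl) (haM 0 0 le_rfl)
  set C := ∑' k, c k with hC
  have hC0 : 0 ≤ C := tsum_nonneg hc0
  rw [Metric.tendsto_atTop]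
  intro ε hε
  have hε1 : 0 < ε / (2 * (C + 1)) := by positivity
  have hε2 : 0 < ε / (2 * (M + 1)) := by positivity
  -- choose m with tail small
  have htail : Filter.Tendsto (fun m => C - ∑ k ∈ Finset.range m, c k) Filter.atTop (nhds 0) := by
    have := hc.hasSum.tendsto_sum_nat
    have := (tendsto_const_nhds (x := C) (f := Filter.atTop (α := ℕ))).sub this
    simpa [← hC] using this
  obtain ⟨m, hm⟩ := (htail.eventually (gt_mem_nhds hε2)).exists
  -- eventually all a n k small for k < m
  have hev : ∀ᶠ n in Filter.atTop, ∀ k ∈ Finset.range m, a n k < ε / (2 * (C + 1)) :=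
    (Finset.range m).eventually_all.2 fun k _ => (hak k).eventually (gt_mem_nhds hε1)
  obtain ⟨N, hN⟩ := (hev.and (eventually_ge_atTop m)).exists_forall_of_atTop
  refine ⟨N, fun n hn => ?_⟩
  obtain ⟨hsmall, hmn⟩ := hN n hn
  have hpart : ∀ j, ∑ k ∈ Finset.range j, c k ≤ C := fun j => Summable.sum_le_tsum _ (fun k _ => hc0 k) hc
  have hmn1 : m ≤ n + 1 := le_trans hmn (Nat.le_succ n)
  rw [Real.dist_eq, sub_zero]
  have hsplit : ∑ k ∈ Finset.range (n + 1), c k * a n k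
      = ∑ k ∈ Finset.range m, c k * a n k + ∑ k ∈ Finset.Ico m (n + 1), c k * a n k := by
    exact (Finset.sum_range_add_sum_Ico _ hmn1).symm
  have h1 : ∑ k ∈ Finset.range m, c k * a n k ≤ C * (ε / (2 * (C + 1))) := by
    calc ∑ k ∈ Finset.range m, c k * a n k
        ≤ ∑ k ∈ Finset.range m, c k * (ε / (2 * (C + 1))) := by
          refine Finset.sum_le_sum fun k hk => ?_
          exact mul_le_mul_of_nonneg_left (le_of_lt (hsmall k hk)) (hc0 k)
      _ = (∑ k ∈ Finset.range m, c k) * (ε / (2 * (C + 1))) := by rw [Finset.sum_mul]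
      _ ≤ C * (ε / (2 * (C + 1))) := by
          exact mul_le_mul_of_nonneg_right (hpart m) (le_of_lt hε1)
  have h2 : ∑ k ∈ Finset.Ico m (n + 1), c k * a n k ≤ M * (ε / (2 * (M + 1))) := by
    have hIco : ∑ k ∈ Finset.Ico m (n + 1), c k ≤ ε / (2 * (M + 1)) := by
      have : ∑ k ∈ Finset.Ico m (n + 1), c k
          = ∑ k ∈ Finset.range (n + 1), c k - ∑ k ∈ Finset.range m, c k := by
        have := Finset.sum_range_add_sum_Ico c hmn1
        linarith
      rw [this]
      have := hpart (n + 1)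
      linarith [hm]
    calc ∑ k ∈ Finset.Ico m (n + 1), c k * a n k
        ≤ ∑ k ∈ Finset.Ico m (n + 1), c k * M := by
          refine Finset.sum_le_sum fun k hk => ?_
          have hk' := (Finset.mem_Ico.1 hk).2
          exact mul_le_mul_of_nonneg_left (haM n k (Nat.lt_succ_iff.1 hk')) (hc0 k)
      _ = (∑ k ∈ Finset.Ico m (n + 1), c k) * M := by rw [Finset.sum_mul]
      _ ≤ (ε / (2 * (M + 1))) * M := mul_le_mul_of_nonneg_right hIco hM
      _ = M * (ε / (2 * (M + 1))) := by ring
  have hnonneg : 0 ≤ ∑ k ∈ Finset.range (n + 1), c k * a n k :=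
    Finset.sum_nonneg fun k hk => mul_nonneg (hc0 k) (ha0 n k (Nat.lt_succ_iff.1 (Finset.mem_range.1 hk)))
  rw [abs_of_nonneg hnonneg, hsplit]
  have key : C * (ε / (2 * (C + 1))) + M * (ε / (2 * (M + 1))) < ε := by
    have e1 : C * (ε / (2 * (C + 1))) < ε / 2 := by
      rw [mul_div_assoc', div_lt_div_iff₀ (by positivity) (by norm_num : (0:ℝ) < 2)]
      nlinarith
    have e2 : M * (ε / (2 * (M + 1))) < ε / 2 := by
      rw [mul_div_assoc', div_lt_div_iff₀ (by positivity) (by norm_num : (0:ℝ) < 2)]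
      nlinarith
    linarith
  linarith [h1, h2]


/-- `φ_x(t) = f(x+t) + f(x−t) − 2f(x)`. -/
noncomputable def phi (f : ℝ → ℝ) (x t : ℝ) : ℝ := f (x + t) + f (x - t) - 2 * f x

/-- for `Ψ(t) = (1+|t|)log(1+|t|) − |t|` (with `Ψ′(t) = log(1+t)`),
at every `L^Ψ`-point `x` of `f ∈ L^Ψ` the approximating quantity
`Σ_{k=0}^n (Ψ′(1/(k+1))/(k+1)^{1/2}) Ψ(w_x f(π(k+1)/(n+1))_Ψ)
  + (n+1) Ψ(1/(n+1)) Ψ(w_x f(π)_Ψ)` tends to `0` as `n → ∞`. -/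
theorem statement2
    (Ψ Ψinv : ℝ → ℝ)
    (hΨdef : ∀ t, Ψ t = (1 + |t|) * Real.log (1 + |t|) - |t|)
    -- Ψinv is the inverse of Ψ on [0, ∞)
    (hΨinv₁ : ∀ u ≥ (0 : ℝ), Ψinv (Ψ u) = u) (hΨinv₂ : ∀ v ≥ (0 : ℝ), Ψ (Ψinv v) = v)
    -- f is 2π-periodic and f ∈ L^Ψ
    (f : ℝ → ℝ) (hper : Function.Periodic f (2 * π))
    (hfint : IntervalIntegrable f volume (-π) π)
    (hfΨ : IntervalIntegrable (fun t => Ψ |f t|) volume (-π) π)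
    -- x is an L^Ψ-point of f
    (x : ℝ)
    (hφΨint : IntervalIntegrable (fun t => Ψ |phi f x t|) volume 0 π)
    (hLΨpoint : Filter.Tendsto
      (fun δ => Ψinv ((1 / δ) * ∫ t in (0 : ℝ)..δ, Ψ |phi f x t|))
      (nhdsWithin 0 (Set.Ioi 0)) (nhds 0)) :
    Filter.Tendsto
      (fun n : ℕ =>
        (∑ k ∈ Finset.range (n + 1),
          (Real.log (1 + 1 / ((k : ℝ) + 1)) / Real.sqrt ((k : ℝ) + 1)) *
            Ψ (Ψinv ((1 / (π * ((k : ℝ) + 1) / ((n : ℝ) + 1))) *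
              ∫ t in (0 : ℝ)..(π * ((k : ℝ) + 1) / ((n : ℝ) + 1)), Ψ |phi f x t|)))
        + ((n : ℝ) + 1) * Ψ (1 / ((n : ℝ) + 1)) *
            Ψ (Ψinv ((1 / π) * ∫ t in (0 : ℝ)..π, Ψ |phi f x t|)))
      Filter.atTop (nhds 0) := by
  have hπ : (0:ℝ) < π := Real.pi_pos
  have hΨ0 : Ψ 0 = 0 := by simp [hΨdef]
  have hΨcont : Continuous Ψ := by
    have hΨ : Ψ = fun t => (1 + |t|) * Real.log (1 + |t|) - |t| := funext hΨdef
    rw [hΨ]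
    have h1 : Continuous fun t : ℝ => 1 + |t| := by continuity
    exact (h1.mul (h1.log fun t => by positivity)).sub continuous_abs
  have hΨnonneg : ∀ t, 0 ≤ Ψ t := by
    intro t
    rw [hΨdef]
    have hu0 : (0:ℝ) ≤ |t| := abs_nonneg t
    have h1 : Real.log (1 + |t|)⁻¹ ≤ (1 + |t|)⁻¹ - 1 :=
      Real.log_le_sub_one_of_pos (by positivity)
    rw [Real.log_inv] at h1
    have h2 : (1 + |t|) * (1 + |t|)⁻¹ = 1 := mul_inv_cancel₀ (by positivity)
    nlinarith
  have hΨsq : ∀ t : ℝ, 0 ≤ t → Ψ t ≤ t ^ 2 := by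
    intro t ht
    rw [hΨdef, abs_of_nonneg ht]
    have h1 : Real.log (1 + t) ≤ t := by
      have := Real.log_le_sub_one_of_pos (show (0:ℝ) < 1 + t by linarith)
      linarith
    have h2 : (0:ℝ) ≤ Real.log (1 + t) := Real.log_nonneg (by linarith)
    nlinarith
  set g : ℝ → ℝ := fun t => Ψ |phi f x t| with hgdef
  have hg0 : ∀ t, 0 ≤ g t := fun t => hΨnonneg _
  set h : ℝ → ℝ := fun δ => (1 / δ) * ∫ t in (0:ℝ)..δ, g t with hhdef
  have hh0 : ∀ δ, 0 < δ → 0 ≤ h δ := fun δ hδ =>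
    mul_nonneg (by positivity) (intervalIntegral.integral_nonneg hδ.le fun t _ => hg0 t)
  have hhtend : Filter.Tendsto h (nhdsWithin 0 (Set.Ioi 0)) (nhds 0) := by
    have h1 : Filter.Tendsto (fun δ => Ψ (Ψinv (h δ))) (nhdsWithin 0 (Set.Ioi 0)) (nhds 0) := by
      have := (hΨcont.tendsto 0).comp hLΨpoint
      rwa [hΨ0] at this
    refine h1.congr' ?_
    filter_upwards [self_mem_nhdsWithin] with δ hδ
    exact hΨinv₂ _ (hh0 δ hδ)
  -- boundedness
  obtain ⟨η, hη0, hηb⟩ : ∃ η > (0:ℝ), ∀ δ, 0 < δ → δ < η → h δ ≤ 1 := by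
    have hev := hhtend.eventually (gt_mem_nhds one_pos)
    rw [eventually_nhdsWithin_iff, Metric.eventually_nhds_iff] at hev
    obtain ⟨η, hη0, hη⟩ := hev
    exact ⟨η, hη0, fun δ h0 hδ =>
      (hη (by rw [Real.dist_eq, sub_zero, abs_of_pos h0]; exact hδ) h0).le⟩
  set I : ℝ := ∫ t in (0:ℝ)..π, g t with hIdef
  have hI0 : 0 ≤ I := intervalIntegral.integral_nonneg hπ.le fun t _ => hg0 t
  set M : ℝ := max 1 ((1 / η) * I) with hMdef
  have hM : ∀ δ, 0 < δ → δ ≤ π → h δ ≤ M := by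
    intro δ h0 hδπ
    rcases lt_or_ge δ η with hc | hc
    · exact le_trans (hηb δ h0 hc) (le_max_left _ _)
    · have hint1 : IntervalIntegrable g volume 0 δ := by
        apply hφΨint.mono_set
        rw [Set.uIcc_of_le h0.le, Set.uIcc_of_le hπ.le]
        exact Set.Icc_subset_Icc le_rfl hδπ
      have hint2 : IntervalIntegrable g volume δ π := by
        apply hφΨint.mono_set
        rw [Set.uIcc_of_le hδπ, Set.uIcc_of_le hπ.le]
        exact Set.Icc_subset_Icc h0.le le_rfl
      have hsplit : (∫ t in (0:ℝ)..δ, g t) + ∫ t in δ..π, g t = I :=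
        intervalIntegral.integral_add_adjacent_intervals hint1 hint2
      have h2 : (0:ℝ) ≤ ∫ t in δ..π, g t :=
        intervalIntegral.integral_nonneg hδπ fun t _ => hg0 t
      have h3 : (∫ t in (0:ℝ)..δ, g t) ≤ I := by linarith
      have h4 : (1:ℝ)/δ ≤ 1/η := by
        apply one_div_le_one_div_of_le hη0 hc
      calc h δ ≤ (1/δ) * I :=
            mul_le_mul_of_nonneg_left h3 (by positivity)
        _ ≤ (1/η) * I := mul_le_mul_of_nonneg_right h4 hI0
        _ ≤ M := le_max_right _ _
  -- coefficients
  set c : ℕ → ℝ := fun k => Real.log (1 + 1 / ((k:ℝ) + 1)) / Real.sqrt ((k:ℝ) + 1) with hcdef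
  have hc0 : ∀ k, 0 ≤ c k := fun k =>
    div_nonneg (Real.log_nonneg (le_add_of_nonneg_right (by positivity))) (Real.sqrt_nonneg _)
  have hpow : ∀ k : ℕ, ((k:ℝ) + 1) ^ (3/2 : ℝ) = ((k:ℝ) + 1) * Real.sqrt ((k:ℝ) + 1) := by
    intro k
    rw [show (3/2:ℝ) = 1 + 1/2 by norm_num, Real.rpow_add (by positivity), Real.rpow_one,
      ← Real.sqrt_eq_rpow]
  have hcsum : Summable c := by
    have hb0 : Summable (fun n : ℕ => 1 / (n:ℝ) ^ (3/2 : ℝ)) :=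
      Real.summable_one_div_nat_rpow.2 (by norm_num)
    have hb1 := (summable_nat_add_iff 1).2 hb0
    have hb : Summable (fun k : ℕ => 1 / ((k:ℝ) + 1) ^ (3/2 : ℝ)) :=
      hb1.congr (fun k => by push_cast; ring_nf)
    refine Summable.of_nonneg_of_le hc0 (fun k => ?_) hb
    have hlog : Real.log (1 + 1 / ((k:ℝ)+1)) ≤ 1 / ((k:ℝ)+1) := by
      have := Real.log_le_sub_one_of_pos (show (0:ℝ) < 1 + 1/((k:ℝ)+1) by positivity)
      linarith
    have hs : 0 < Real.sqrt ((k:ℝ)+1) := Real.sqrt_pos.2 (by positivity)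
    calc c k ≤ (1 / ((k:ℝ)+1)) / Real.sqrt ((k:ℝ)+1) := by
          exact div_le_div_of_nonneg_right hlog hs.le
      _ = 1 / (((k:ℝ)+1) ^ (3/2:ℝ)) := by rw [hpow k, div_div]
  -- the array a
  set a : ℕ → ℕ → ℝ := fun n k => h (π * ((k:ℝ) + 1) / ((n:ℝ) + 1)) with hadef
  have hδpos : ∀ n k : ℕ, 0 < π * ((k:ℝ)+1) / ((n:ℝ)+1) := fun n k => by positivity
  have hδle : ∀ n k : ℕ, k ≤ n → π * ((k:ℝ)+1) / ((n:ℝ)+1) ≤ π := by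
    intro n k hk
    rw [div_le_iff₀ (by positivity)]
    have hkn : ((k:ℝ)+1) ≤ (n:ℝ)+1 := by
      have : (k:ℝ) ≤ (n:ℝ) := Nat.cast_le.2 hk
      linarith
    nlinarith
  have hak : ∀ k, Filter.Tendsto (fun n => a n k) Filter.atTop (nhds 0) := by
    intro k
    have h0 : Filter.Tendsto (fun n : ℕ => π * ((k:ℝ)+1) / ((n:ℝ)+1)) Filter.atTop (nhds 0) := by
      have := tendsto_one_div_add_atTop_nhds_zero_nat.const_mul (π * ((k:ℝ)+1))
      simpa [mul_one_div, div_eq_mul_inv] using this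
    exact hhtend.comp (tendsto_nhdsWithin_of_tendsto_nhds_of_eventually_within _ h0
      (Filter.Eventually.of_forall fun n => hδpos n k))
  have hsum := aux_sum c a M hcsum hc0 (fun n k _ => hh0 _ (hδpos n k))
    (fun n k hk => hM _ (hδpos n k) (hδle n k hk)) hak
  -- second term
  have hπterm : Ψ (Ψinv ((1/π) * ∫ t in (0:ℝ)..π, g t)) = h π := hΨinv₂ _ (hh0 π hπ)
  have hB : Filter.Tendsto (fun n : ℕ => ((n:ℝ)+1) * Ψ (1/((n:ℝ)+1)) * h π)
      Filter.atTop (nhds 0) := by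
    apply squeeze_zero (g := fun n : ℕ => (1/((n:ℝ)+1)) * h π)
      (fun n => mul_nonneg (mul_nonneg (by positivity) (hΨnonneg _)) (hh0 π hπ))
    · intro n
      have h1 : Ψ (1/((n:ℝ)+1)) ≤ (1/((n:ℝ)+1))^2 := hΨsq _ (by positivity)
      have h3 : ((n:ℝ)+1) * (1/((n:ℝ)+1))^2 = 1/((n:ℝ)+1) := by
        field_simp
      have h4 := hh0 π hπ
      have h2 := mul_le_mul_of_nonneg_left h1 (show (0:ℝ) ≤ (n:ℝ)+1 by positivity)
      exact mul_le_mul_of_nonneg_right (h2.trans_eq h3) h4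
    · simpa using tendsto_one_div_add_atTop_nhds_zero_nat.mul_const (h π)
  have htot := hsum.add hB
  rw [add_zero] at htot
  refine htot.congr fun n => ?_
  congr 1
  · refine Finset.sum_congr rfl fun k hk => ?_
    exact (congrArg (fun y => c k * y) (hΨinv₂ _ (hh0 _ (hδpos n k)))).symm
  · exact (congrArg (fun y => ((n:ℝ)+1) * Ψ (1/((n:ℝ)+1)) * y) hπterm).symm
end

section
/- Let Ψ be a convex N-function with left derivative Ψ′. Let f be 2π-periodic, x ∈ ℝ, and assume ∫_0^π Ψ(|φ_x(t)|) dt < ∞. Then for every n ≥ 1: Σ_{k=0}^{n} Ψ(1/(k+1)) · Ψ( ((n+1)/π) ∫_{Δ_k^n} |φ_x(t)| dt ) ≤ Σ_{k=0}^{n-1} (1/(k+1)) Ψ′(1/(k+1)) · [ (n+1)/(π(k+1)) ∫_0^{π(k+1)/(n+1)} Ψ(|φ_x(t)|) dt ] + (n+1) Ψ(1/(n+1)) · (1/π) ∫_0^π Ψ(|φ_x(t)|) dt, where Δ_k^n = ( πk/(n+1), π(k+1)/(n+1) ). -/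
open Real MeasureTheory Filter Set

/-- `Ψ` is an N-function. -/
def IsNFunction (Ψ : ℝ → ℝ) : Prop :=
  (∀ u, Ψ (-u) = Ψ u) ∧ ConvexOn ℝ Set.univ Ψ ∧ (∀ u, 0 ≤ Ψ u) ∧
  (∀ u, Ψ u = 0 ↔ u = 0) ∧
  Filter.Tendsto (fun u => Ψ u / u) (nhdsWithin 0 (Set.Ioi 0)) (nhds 0) ∧
  Filter.Tendsto (fun u => Ψ u / u) Filter.atTop Filter.atTop

lemma aux_slope (Ψ : ℝ → ℝ) (q : ℝ → ℝ) (hconv : ConvexOn ℝ Set.univ Ψ) {r s : ℝ} (hrs : r < s)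
    (hd : HasDerivWithinAt Ψ (q s) (Set.Iic s) s) : Ψ s - Ψ r ≤ q s * (s - r) := by
  have htend : Tendsto (slope Ψ s) (nhdsWithin s (Set.Iic s \ {s})) (nhds (q s)) :=
    hasDerivWithinAt_iff_tendsto_slope.1 hd
  have hset : Set.Iic s \ {s} = Set.Iio s := Set.Iic_diff_right
  rw [hset] at htend
  have hslope : slope Ψ s r ≤ q s := by
    refine ge_of_tendsto htend ?_
    filter_upwards [self_mem_nhdsWithin,
      eventually_nhdsWithin_of_eventually_nhds (eventually_gt_nhds hrs)] with u hu hru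
    have := hconv.secant_mono (Set.mem_univ s) (Set.mem_univ r) (Set.mem_univ u)
      (ne_of_lt hrs) (ne_of_lt hu) hru.le
    simpa [slope_def_field] using this
  have hs : slope Ψ s r = (Ψ s - Ψ r) / (s - r) := by
    rw [slope_def_field]
    rw [div_eq_div_iff (by linarith) (by linarith)]
    ring
  rw [hs] at hslope
  exact (div_le_iff₀ (by linarith)).1 hslope

lemma aux_jensen (Ψ : ℝ → ℝ) (hconv : ConvexOn ℝ Set.univ Ψ) (hpos : ∀ u, 0 ≤ Ψ u)
    (hΨ0 : Ψ 0 = 0) (g : ℝ → ℝ) {a b : ℝ} (hab : a < b)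
    (hgΨ : IntervalIntegrable (fun t => Ψ (g t)) volume a b) :
    Ψ ((b - a)⁻¹ * ∫ t in a..b, g t) ≤ (b - a)⁻¹ * ∫ t in a..b, Ψ (g t) := by
  have hba : 0 < b - a := by linarith
  have hint_nonneg : 0 ≤ ∫ t in a..b, Ψ (g t) :=
    intervalIntegral.integral_nonneg hab.le (fun u _ => hpos _)
  by_cases hg : IntervalIntegrable g volume a b
  · set μ := volume.restrict (Set.Ioc a b) with hμ
    haveI : IsFiniteMeasure μ := by
      constructor
      rw [hμ, Measure.restrict_apply_univ, Real.volume_Ioc]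
      exact ENNReal.ofReal_lt_top
    haveI : NeZero μ := by
      constructor
      rw [hμ]
      intro h
      have := congrArg (fun m : Measure ℝ => m Set.univ) h
      simp [Real.volume_Ioc, hab, ENNReal.ofReal_eq_zero] at this
      linarith
    have hcont : ContinuousOn Ψ Set.univ := hconv.continuousOn isOpen_univ
    have hμuniv : (μ Set.univ).toReal = b - a := by
      rw [hμ, Measure.restrict_apply_univ, Real.volume_Ioc, ENNReal.toReal_ofReal hba.le]
    have hgi : Integrable g μ := (intervalIntegrable_iff_integrableOn_Ioc_of_le hab.le).1 hg
    have hΨgi : Integrable (Ψ ∘ g) μ :=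
      (intervalIntegrable_iff_integrableOn_Ioc_of_le hab.le).1 hgΨ
    have := hconv.map_average_le hcont isClosed_univ
      (Filter.Eventually.of_forall fun u => Set.mem_univ _) hgi hΨgi
    rw [average_eq, average_eq, measureReal_def, hμuniv] at this
    have h1 : ∫ x, g x ∂μ = ∫ t in a..b, g t := by
      rw [intervalIntegral.integral_of_le hab.le]
    have h2 : ∫ x, Ψ (g x) ∂μ = ∫ t in a..b, Ψ (g t) := by
      rw [intervalIntegral.integral_of_le hab.le]
    rw [h1, h2] at this
    simpa [smul_eq_mul] using this
  · rw [intervalIntegral.integral_undef hg]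
    simpa [hΨ0] using mul_nonneg (by positivity) hint_nonneg

lemma aux_ring (qs kk nn pp : ℝ) :
    1 / kk * qs * ((nn + 1) / (pp * kk)) = qs / kk ^ 2 * ((nn + 1) / pp) := by ring

/-- the Jensen + Abel-transformation inequality
`Σ_{k=0}^{n} Ψ(1/(k+1)) Ψ(((n+1)/π)∫_{Δ_k^n}|φ_x|)
 ≤ Σ_{k=0}^{n-1} (1/(k+1))Ψ′(1/(k+1)) [(n+1)/(π(k+1)) ∫_0^{π(k+1)/(n+1)} Ψ(|φ_x|)]
   + (n+1)Ψ(1/(n+1)) (1/π)∫_0^π Ψ(|φ_x|)` for all `n ≥ 1`,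
where `Δ_k^n = (πk/(n+1), π(k+1)/(n+1))`. -/
theorem statement5
    (Ψ q : ℝ → ℝ)
    (hΨ : IsNFunction Ψ)
    -- q = Ψ′ is the left derivative of Ψ, which is nondecreasing
    (hq : ∀ s > (0 : ℝ), HasDerivWithinAt Ψ (q s) (Set.Iic s) s)
    (hqmono : MonotoneOn q (Set.Ioi 0))
    -- f is 2π-periodic, x ∈ ℝ, and ∫_0^π Ψ(|φ_x(t)|) dt < ∞
    (f : ℝ → ℝ) (hper : Function.Periodic f (2 * π)) (x : ℝ)
    (hφΨint : IntervalIntegrable (fun t => Ψ |phi f x t|) volume 0 π) :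
    ∀ n : ℕ, 1 ≤ n →
      (∑ k ∈ Finset.range (n + 1),
        Ψ (1 / ((k : ℝ) + 1)) *
          Ψ ((((n : ℝ) + 1) / π) *
            ∫ t in (π * (k : ℝ) / ((n : ℝ) + 1))..(π * ((k : ℝ) + 1) / ((n : ℝ) + 1)),
              |phi f x t|))
      ≤ (∑ k ∈ Finset.range n,
          (1 / ((k : ℝ) + 1)) * q (1 / ((k : ℝ) + 1)) *
            ((((n : ℝ) + 1) / (π * ((k : ℝ) + 1))) *
              ∫ t in (0 : ℝ)..(π * ((k : ℝ) + 1) / ((n : ℝ) + 1)), Ψ |phi f x t|))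
        + ((n : ℝ) + 1) * Ψ (1 / ((n : ℝ) + 1)) *
            ((1 / π) * ∫ t in (0 : ℝ)..π, Ψ |phi f x t|) := by
  intro n hn
  obtain ⟨heven, hconv, hpos, hzero, _, _⟩ := hΨ
  have hΨ0 : Ψ 0 = 0 := (hzero 0).mpr rfl
  have hπ : (0:ℝ) < π := Real.pi_pos
  have hN : (0:ℝ) < (n:ℝ) + 1 := by positivity
  set g : ℝ → ℝ := fun t => |phi f x t| with hgdef
  set T : ℕ → ℝ := fun k => π * (k:ℝ) / ((n:ℝ) + 1) with hT
  have hT0 : T 0 = 0 := by simp [hT]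
  have hTlast : T (n+1) = π := by
    simp only [hT]
    push_cast
    field_simp
  have hTmono : ∀ j k : ℕ, j ≤ k → T j ≤ T k := by
    intro j k hjk
    simp only [hT]
    gcongr
  have hTstep : ∀ k : ℕ, T (k+1) - T k = π / ((n:ℝ) + 1) := by
    intro k
    simp only [hT]
    push_cast
    field_simp
    ring
  have hTsucc : ∀ k : ℕ, T (k+1) = π * ((k:ℝ) + 1) / ((n:ℝ) + 1) := by
    intro k; simp only [hT]; push_cast; ring
  -- integrability of Ψ ∘ g on subintervals
  have hgint : ∀ a b : ℝ, 0 ≤ a → a ≤ b → b ≤ π →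
      IntervalIntegrable (fun t => Ψ (g t)) volume a b := by
    intro a b ha hab hb
    refine hφΨint.mono_set ?_
    rw [Set.uIcc_of_le (by linarith : (0:ℝ) ≤ π), Set.uIcc_of_le hab]
    exact Set.Icc_subset_Icc ha hb
  have hTnonneg : ∀ k : ℕ, 0 ≤ T k := fun k => hT0 ▸ hTmono 0 k (Nat.zero_le k)
  have hTle : ∀ k : ℕ, k ≤ n + 1 → T k ≤ π := fun k hk => hTlast ▸ hTmono k (n+1) hk
  have hadj : ∀ j : ℕ, j < n + 1 →
      IntervalIntegrable (fun t => Ψ (g t)) volume (T j) (T (j+1)) := fun j hj =>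
    hgint _ _ (hTnonneg j) (hTmono j (j+1) (Nat.le_succ j)) (hTle (j+1) hj)
  set c : ℕ → ℝ := fun k => Ψ (1/((k:ℝ)+1)) with hcdef
  set b : ℕ → ℝ := fun k => (((n:ℝ)+1)/π) * ∫ t in T k..T (k+1), Ψ (g t) with hbdef
  set J : ℕ → ℝ := fun k => ∫ t in (0:ℝ)..T (k+1), Ψ (g t) with hJdef
  have hJnonneg : ∀ k : ℕ, 0 ≤ J k := fun k =>
    intervalIntegral.integral_nonneg (hTnonneg (k+1)) (fun u _ => hpos _)
  have hsumb : ∀ k : ℕ, k ≤ n → ∑ j ∈ Finset.range (k+1), b j = (((n:ℝ)+1)/π) * J k := by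
    intro k hk
    rw [hbdef, ← Finset.mul_sum, hJdef]
    congr 1
    rw [intervalIntegral.sum_integral_adjacent_intervals
      (fun j hj => hadj j (lt_of_lt_of_le hj (by omega))), hT0]
  -- Step 1: Jensen on each subinterval
  have hstep1 : (∑ k ∈ Finset.range (n + 1),
        Ψ (1 / ((k : ℝ) + 1)) *
          Ψ ((((n : ℝ) + 1) / π) *
            ∫ t in (π * (k : ℝ) / ((n : ℝ) + 1))..(π * ((k : ℝ) + 1) / ((n : ℝ) + 1)),
              |phi f x t|))
      ≤ ∑ k ∈ Finset.range (n+1), c k * b k := by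
    refine Finset.sum_le_sum fun k hk => ?_
    have hk' : k < n + 1 := Finset.mem_range.1 hk
    have hab : T k < T (k+1) := by
      have := hTstep k; nlinarith [div_pos hπ hN]
    have hjen := aux_jensen Ψ hconv hpos hΨ0 g hab (hadj k hk')
    rw [hTstep k, inv_div] at hjen
    have he1 : π * (k:ℝ) / ((n:ℝ) + 1) = T k := rfl
    have he2 : π * ((k:ℝ) + 1) / ((n:ℝ) + 1) = T (k+1) := (hTsucc k).symm
    rw [he1, he2]
    exact mul_le_mul_of_nonneg_left hjen (hpos _)
  -- Step 2: Abel summation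
  have habel : ∑ k ∈ Finset.range (n+1), c k * b k
      = c n * ((((n:ℝ)+1)/π) * J n)
        - ∑ k ∈ Finset.range n, (c (k+1) - c k) * ((((n:ℝ)+1)/π) * J k) := by
    have h := Finset.sum_range_by_parts c b (n+1)
    simp only [smul_eq_mul, Nat.add_sub_cancel] at h
    rw [h, hsumb n le_rfl]
    congr 1
    refine Finset.sum_congr rfl fun k hk => ?_
    rw [hsumb k (le_of_lt (Finset.mem_range.1 hk))]
  -- Step 3: bound each Abel term
  have hstep3 : ∀ k ∈ Finset.range n,
      (c k - c (k+1)) * ((((n:ℝ)+1)/π) * J k)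
        ≤ (1 / ((k : ℝ) + 1)) * q (1 / ((k : ℝ) + 1)) *
            ((((n : ℝ) + 1) / (π * ((k : ℝ) + 1))) *
              ∫ t in (0 : ℝ)..(π * ((k : ℝ) + 1) / ((n : ℝ) + 1)), Ψ |phi f x t|) := by
    intro k hk
    set s : ℝ := 1/((k:ℝ)+1) with hsdef
    have hs : (0:ℝ) < s := by positivity
    have hq0 : 0 ≤ q s := by
      have h0 := aux_slope Ψ q hconv hs (hq s hs)
      have := hpos s
      nlinarith [hΨ0]
    have hr : (1:ℝ)/((k:ℝ)+2) < s := by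
      rw [hsdef, div_lt_div_iff₀ (by positivity) (by positivity)]; linarith
    have h1 : c k - c (k+1) ≤ q s * (s - 1/((k:ℝ)+2)) := by
      have h := aux_slope Ψ q hconv hr (hq s hs)
      have hck : c (k+1) = Ψ (1/((k:ℝ)+2)) := by
        simp only [hcdef]
        congr 2
        push_cast
        ring
      have hckk : c k = Ψ s := rfl
      rw [hckk, hck]
      exact h
    have h2 : s - 1/((k:ℝ)+2) ≤ 1/(((k:ℝ)+1)^2) := by
      rw [hsdef, div_sub_div _ _ (by positivity) (by positivity)]
      rw [div_le_div_iff₀ (by positivity) (by positivity)]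
      ring_nf
      nlinarith [sq_nonneg ((k:ℝ)+1)]
    have h3 : c k - c (k+1) ≤ q s / (((k:ℝ)+1)^2) := by
      calc c k - c (k+1) ≤ q s * (s - 1/((k:ℝ)+2)) := h1
        _ ≤ q s * (1/(((k:ℝ)+1)^2)) := mul_le_mul_of_nonneg_left h2 hq0
        _ = q s / (((k:ℝ)+1)^2) := by ring
    have hS : 0 ≤ (((n:ℝ)+1)/π) * J k := mul_nonneg (by positivity) (hJnonneg k)
    have hrhs : (1 / ((k : ℝ) + 1)) * q s *
            ((((n : ℝ) + 1) / (π * ((k : ℝ) + 1))) *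
              ∫ t in (0 : ℝ)..(π * ((k : ℝ) + 1) / ((n : ℝ) + 1)), Ψ |phi f x t|)
        = (q s / (((k:ℝ)+1)^2)) * ((((n:ℝ)+1)/π) * J k) := by
      simp only [hJdef]
      have : (∫ t in (0 : ℝ)..(π * ((k : ℝ) + 1) / ((n : ℝ) + 1)), Ψ |phi f x t|)
          = ∫ t in (0:ℝ)..T (k+1), Ψ (g t) := by rw [hTsucc k]
      rw [this]
      have hsc : (1/((k:ℝ)+1)) * q s * (((n:ℝ)+1)/(π*((k:ℝ)+1)))
          = q s/(((k:ℝ)+1)^2) * (((n:ℝ)+1)/π) := aux_ring _ _ _ _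
      calc (1/((k:ℝ)+1)) * q s * ((((n:ℝ)+1)/(π*((k:ℝ)+1))) * ∫ t in (0:ℝ)..T (k+1), Ψ (g t))
          = ((1/((k:ℝ)+1)) * q s * (((n:ℝ)+1)/(π*((k:ℝ)+1)))) * ∫ t in (0:ℝ)..T (k+1), Ψ (g t) := by
            ring
        _ = (q s/(((k:ℝ)+1)^2) * (((n:ℝ)+1)/π)) * ∫ t in (0:ℝ)..T (k+1), Ψ (g t) := by rw [hsc]
        _ = (q s / (((k:ℝ)+1)^2)) * ((((n:ℝ)+1)/π) * ∫ t in (0:ℝ)..T (k+1), Ψ (g t)) := by ring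
    rw [hrhs]
    exact mul_le_mul_of_nonneg_right h3 hS
  -- final term equality
  have hfinal : c n * ((((n:ℝ)+1)/π) * J n)
      = ((n : ℝ) + 1) * Ψ (1 / ((n : ℝ) + 1)) *
            ((1 / π) * ∫ t in (0 : ℝ)..π, Ψ |phi f x t|) := by
    simp only [hcdef, hJdef, hgdef]
    rw [hTlast]
    ring
  calc (∑ k ∈ Finset.range (n + 1),
        Ψ (1 / ((k : ℝ) + 1)) *
          Ψ ((((n : ℝ) + 1) / π) *
            ∫ t in (π * (k : ℝ) / ((n : ℝ) + 1))..(π * ((k : ℝ) + 1) / ((n : ℝ) + 1)),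
              |phi f x t|))
      ≤ ∑ k ∈ Finset.range (n+1), c k * b k := hstep1
    _ = c n * ((((n:ℝ)+1)/π) * J n)
        - ∑ k ∈ Finset.range n, (c (k+1) - c k) * ((((n:ℝ)+1)/π) * J k) := habel
    _ = (∑ k ∈ Finset.range n, (c k - c (k+1)) * ((((n:ℝ)+1)/π) * J k))
        + c n * ((((n:ℝ)+1)/π) * J n) := by
      have hterm : ∀ k ∈ Finset.range n, (c (k+1) - c k) * ((((n:ℝ)+1)/π) * J k)
          = -((c k - c (k+1)) * ((((n:ℝ)+1)/π) * J k)) := fun k _ => by ring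
      rw [Finset.sum_congr rfl hterm, Finset.sum_neg_distrib]
      ring
    _ ≤ (∑ k ∈ Finset.range n,
          (1 / ((k : ℝ) + 1)) * q (1 / ((k : ℝ) + 1)) *
            ((((n : ℝ) + 1) / (π * ((k : ℝ) + 1))) *
              ∫ t in (0 : ℝ)..(π * ((k : ℝ) + 1) / ((n : ℝ) + 1)), Ψ |phi f x t|))
        + c n * ((((n:ℝ)+1)/π) * J n) :=
      add_le_add_left (Finset.sum_le_sum hstep3) _
    _ = _ := by rw [hfinal]
end

section
/- Let g : (0, π] → [0,∞) be integrable on (0, π] with (1/δ) ∫_0^δ g(t) dt → 0 as δ → 0⁺. Then max_{0 ≤ k ≤ n} [ (n+1)/(π (k+1)^{3/2}) ∫_0^{π(k+1)/(n+1)} g(t) dt ] → 0 as n → ∞. -/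
open Real MeasureTheory Filter Set

private lemma rpow_three_halves {x : ℝ} (hx : 0 < x) :
    x ^ ((3 : ℝ) / 2) = x * Real.sqrt x := by
  rw [show (3 : ℝ) / 2 = 1 + 1 / 2 by norm_num, Real.rpow_add hx, Real.rpow_one,
    ← Real.sqrt_eq_rpow]

/-- if `g : (0,π] → [0,∞)` is integrable on `(0,π]` with
`(1/δ)∫_0^δ g → 0` as `δ → 0⁺`, then
`max_{0 ≤ k ≤ n} [(n+1)/(π(k+1)^{3/2}) ∫_0^{π(k+1)/(n+1)} g] → 0` as `n → ∞`. -/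
theorem statement7
    (g : ℝ → ℝ)
    (hg_nonneg : ∀ t ∈ Set.Ioc (0 : ℝ) π, 0 ≤ g t)
    (hg_int : IntervalIntegrable g volume 0 π)
    (havg : Filter.Tendsto (fun δ => (1 / δ) * ∫ t in (0 : ℝ)..δ, g t)
      (nhdsWithin 0 (Set.Ioi 0)) (nhds 0)) :
    Filter.Tendsto
      (fun n : ℕ =>
        (Finset.range (n + 1)).sup' Finset.nonempty_range_add_one
          (fun k => (((n : ℝ) + 1) / (π * ((k : ℝ) + 1) ^ ((3 : ℝ) / 2))) *
            ∫ t in (0 : ℝ)..(π * ((k : ℝ) + 1) / ((n : ℝ) + 1)), g t))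
      Filter.atTop (nhds 0) := by
  have hπ := Real.pi_pos
  have hJnonneg : ∀ δ : ℝ, 0 < δ → δ ≤ π → 0 ≤ ∫ t in (0 : ℝ)..δ, g t := by
    intro δ hδ hδπ
    rw [intervalIntegral.integral_of_le hδ.le]
    refine setIntegral_nonneg measurableSet_Ioc fun t ht => ?_
    exact hg_nonneg t ⟨ht.1, ht.2.trans hδπ⟩
  set I : ℝ := ∫ t in (0 : ℝ)..π, g t with hIdef
  have hI0 : 0 ≤ I := hJnonneg π hπ le_rfl
  have hmono : ∀ δ : ℝ, 0 < δ → δ ≤ π → (∫ t in (0 : ℝ)..δ, g t) ≤ I := by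
    intro δ hδ hδπ
    have h1 : IntervalIntegrable g volume 0 δ := by
      apply hg_int.mono_set
      rw [Set.uIcc_of_le hδ.le, Set.uIcc_of_le hπ.le]
      exact Set.Icc_subset_Icc le_rfl hδπ
    have h2 : IntervalIntegrable g volume δ π := by
      apply hg_int.mono_set
      rw [Set.uIcc_of_le hδπ, Set.uIcc_of_le hπ.le]
      exact Set.Icc_subset_Icc hδ.le le_rfl
    have hadd := intervalIntegral.integral_add_adjacent_intervals h1 h2
    have h2nn : 0 ≤ ∫ t in δ..π, g t := by
      rw [intervalIntegral.integral_of_le hδπ]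
      refine setIntegral_nonneg measurableSet_Ioc fun t ht => ?_
      exact hg_nonneg t ⟨hδ.trans ht.1, ht.2⟩
    linarith [hadd]
  rw [Metric.tendsto_atTop]
  intro ε hε
  rw [Metric.tendsto_nhdsWithin_nhds] at havg
  obtain ⟨η, hηpos, hA⟩ := havg ε hε
  set η' : ℝ := min (η / 2) π with hη'def
  have hη'pos : 0 < η' := lt_min (by linarith) hπ
  have hη'π : η' ≤ π := min_le_right _ _
  have hη'η : η' < η := (min_le_left _ _).trans_lt (by linarith)
  obtain ⟨N, hNgt⟩ := exists_nat_gt (π * (I / (ε * η')) ^ 2 / η')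
  refine ⟨N, fun n hn => ?_⟩
  have hn1 : (0 : ℝ) < (n : ℝ) + 1 := by positivity
  -- facts about each term
  have hδk : ∀ k : ℕ, k ∈ Finset.range (n + 1) →
      0 < π * ((k : ℝ) + 1) / ((n : ℝ) + 1) ∧ π * ((k : ℝ) + 1) / ((n : ℝ) + 1) ≤ π := by
    intro k hk
    have hk' : (k : ℝ) + 1 ≤ (n : ℝ) + 1 := by
      have := Finset.mem_range.mp hk
      have : (k : ℝ) ≤ (n : ℝ) := by exact_mod_cast Nat.lt_succ_iff.mp this
      linarith
    constructor
    · positivity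
    · rw [div_le_iff₀ hn1]
      nlinarith
  have hterm_nonneg : ∀ k : ℕ, k ∈ Finset.range (n + 1) →
      0 ≤ (((n : ℝ) + 1) / (π * ((k : ℝ) + 1) ^ ((3 : ℝ) / 2))) *
        ∫ t in (0 : ℝ)..(π * ((k : ℝ) + 1) / ((n : ℝ) + 1)), g t := by
    intro k hk
    obtain ⟨h1, h2⟩ := hδk k hk
    have := hJnonneg _ h1 h2
    positivity
  rw [Real.dist_eq, sub_zero, abs_lt]
  constructor
  · have h0 : (0 : ℕ) ∈ Finset.range (n + 1) := Finset.mem_range.mpr (Nat.succ_pos n)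
    calc -ε < 0 := by linarith
    _ ≤ _ := le_trans (hterm_nonneg 0 h0)
        (Finset.le_sup' (fun k : ℕ => (((n : ℝ) + 1) / (π * ((k : ℝ) + 1) ^ ((3 : ℝ) / 2))) *
          ∫ t in (0 : ℝ)..(π * ((k : ℝ) + 1) / ((n : ℝ) + 1)), g t) h0)
  · rw [Finset.sup'_lt_iff]
    intro k hk
    obtain ⟨hδpos, hδπ⟩ := hδk k hk
    set δk : ℝ := π * ((k : ℝ) + 1) / ((n : ℝ) + 1) with hδkdef
    have hk1 : (0 : ℝ) < (k : ℝ) + 1 := by positivity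
    have h32 : ((k : ℝ) + 1) ^ ((3 : ℝ) / 2) = ((k : ℝ) + 1) * Real.sqrt ((k : ℝ) + 1) :=
      rpow_three_halves hk1
    have hsqrt1 : (1 : ℝ) ≤ Real.sqrt ((k : ℝ) + 1) := by
      have := Real.sqrt_le_sqrt (show (1 : ℝ) ≤ (k : ℝ) + 1 by linarith)
      simpa using this
    have hJnn := hJnonneg δk hδpos hδπ
    by_cases hcase : δk ≤ η'
    -- small case
    · have hmem : δk ∈ Set.Ioi (0 : ℝ) := hδpos
      have hdist : dist δk 0 < η := by
        rw [Real.dist_eq, sub_zero, abs_of_pos hδpos]; linarith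
      have hAδ := hA hmem hdist
      rw [Real.dist_eq, sub_zero, abs_lt] at hAδ
      have hcoef : ((n : ℝ) + 1) / (π * ((k : ℝ) + 1) ^ ((3 : ℝ) / 2)) ≤ 1 / δk := by
        rw [h32, hδkdef]
        rw [div_le_div_iff₀ (by positivity) (by positivity)]
        have h1 : π * ((k : ℝ) + 1) * 1 ≤ π * ((k : ℝ) + 1) * Real.sqrt ((k : ℝ) + 1) := by
          apply mul_le_mul_of_nonneg_left hsqrt1 (by positivity)
        have h2 : ((n : ℝ) + 1) * (π * ((k : ℝ) + 1) / ((n : ℝ) + 1)) = π * ((k : ℝ) + 1) := by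
          field_simp
        rw [h2]
        linarith
      calc (((n : ℝ) + 1) / (π * ((k : ℝ) + 1) ^ ((3 : ℝ) / 2))) *
            ∫ t in (0 : ℝ)..δk, g t
          ≤ (1 / δk) * ∫ t in (0 : ℝ)..δk, g t := by
            exact mul_le_mul_of_nonneg_right hcoef hJnn
        _ < ε := hAδ.2
    -- large case
    · push_neg at hcase
      set u : ℝ := η' * ((n : ℝ) + 1) / π with hudef
      have hu : 0 < u := by positivity
      have hku : u < (k : ℝ) + 1 := by
        rw [hudef, div_lt_iff₀ hπ]
        rw [hδkdef, lt_div_iff₀ hn1] at hcase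
        nlinarith
      have hsu : 0 < Real.sqrt u := Real.sqrt_pos.mpr hu
      have hsqrtmono : Real.sqrt u ≤ Real.sqrt ((k : ℝ) + 1) := Real.sqrt_le_sqrt hku.le
      have hJI : (∫ t in (0 : ℝ)..δk, g t) ≤ I := hmono δk hδpos hδπ
      have hd1 : u * Real.sqrt u ≤ ((k : ℝ) + 1) * Real.sqrt ((k : ℝ) + 1) :=
        mul_le_mul hku.le hsqrtmono hsu.le (by positivity)
      have key : (((n : ℝ) + 1) / (π * ((k : ℝ) + 1) ^ ((3 : ℝ) / 2))) *
            ∫ t in (0 : ℝ)..δk, g t ≤ I / (η' * Real.sqrt u) := by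
        calc (((n : ℝ) + 1) / (π * ((k : ℝ) + 1) ^ ((3 : ℝ) / 2))) *
              ∫ t in (0 : ℝ)..δk, g t
            ≤ (((n : ℝ) + 1) / (π * ((k : ℝ) + 1) ^ ((3 : ℝ) / 2))) * I := by
              exact mul_le_mul_of_nonneg_left hJI (by positivity)
          _ ≤ (((n : ℝ) + 1) / (π * (u * Real.sqrt u))) * I := by
              rw [h32]
              apply mul_le_mul_of_nonneg_right _ hI0
              apply div_le_div_of_nonneg_left hn1.le (by positivity)
              apply mul_le_mul_of_nonneg_left hd1 hπ.le
          _ = I / (η' * Real.sqrt u) := by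
              have hπu : π * u = η' * ((n : ℝ) + 1) := by
                rw [hudef]; field_simp
              rw [show π * (u * Real.sqrt u) = π * u * Real.sqrt u by ring, hπu]
              field_simp
      have hfin : I / (η' * Real.sqrt u) < ε := by
        have hquot : (0 : ℝ) ≤ I / (ε * η') := by positivity
        have husq : (I / (ε * η')) ^ 2 < u := by
          rw [hudef]
          rw [div_lt_iff₀ hη'pos] at hNgt
          have hNn : (N : ℝ) ≤ (n : ℝ) := by exact_mod_cast hn
          rw [lt_div_iff₀ hπ]
          nlinarith
        have hlt : I / (ε * η') < Real.sqrt u := (Real.lt_sqrt hquot).mpr husq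
        have hεη : (0 : ℝ) < ε * η' := by positivity
        have h2 : I < ε * η' * Real.sqrt u := by
          have h3 := mul_lt_mul_of_pos_left hlt hεη
          have h4 : (ε * η') * (I / (ε * η')) = I := by field_simp
          linarith [h3, h4.ge, h4.le]
        rw [div_lt_iff₀ (by positivity : (0:ℝ) < η' * Real.sqrt u)]
        have : ε * (η' * Real.sqrt u) = ε * η' * Real.sqrt u := by ring
        rw [this]
        exact h2
      exact lt_of_le_of_lt key hfin
end

section
/- Let Ψ be a convex N-function with left derivative q = Ψ′ such that Σ_{k=0}^∞ (k+1)^{-1/2} q(1/(k+1)) < ∞. Let f be 2π-periodic with ∫_0^π Ψ(|φ_x(t)|) dt < ∞, and let x be a point with (1/δ) ∫_0^δ Ψ(|φ_x(t)|) dt → 0 as δ → 0⁺. Then Σ_{k=0}^{n} Ψ(1/(k+1)) · Ψ( ((n+1)/π) ∫_{Δ_k^n} |φ_x(t)| dt ) → 0 as n → ∞, where Δ_k^n = ( πk/(n+1), π(k+1)/(n+1) ). -/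
open Real MeasureTheory Filter Set

lemma abel8 (c u : ℕ → ℝ) (n : ℕ) (h0 : u 0 = 0) :
    ∑ k ∈ Finset.range (n+1), c k * (u (k+1) - u k)
      = c n * u (n+1) + ∑ k ∈ Finset.range n, (c k - c (k+1)) * u (k+1) := by
  induction n with
  | zero => simp [h0]
  | succ n ih =>
    rw [Finset.sum_range_succ, ih, Finset.sum_range_succ]
    ring

lemma dsum8 (c : ℕ → ℝ) (N : ℕ) :
    ∑ k ∈ Finset.range N, (c k - c (k+1)) * ((k : ℝ) + 1)
      = (∑ k ∈ Finset.range N, c k) - (N : ℝ) * c N := by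
  induction N with
  | zero => simp
  | succ N ih =>
    rw [Finset.sum_range_succ, ih, Finset.sum_range_succ]
    push_cast
    ring

lemma sumtend8 (d : ℕ → ℝ) (hd : ∀ k, 0 ≤ d k) (hsum : Summable d)
    (g : ℕ → ℕ → ℝ) (hg0 : ∀ k n, 0 ≤ g k n) (M : ℝ) (hM : 0 ≤ M)
    (hgM : ∀ k n, k < n → g k n ≤ M)
    (hgk : ∀ k, Tendsto (fun n => g k n) atTop (nhds 0)) :
    Tendsto (fun n => ∑ k ∈ Finset.range n, d k * g k n) atTop (nhds 0) := by
  rw [Metric.tendsto_atTop]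
  intro ε hε
  -- tail control
  have htail : Tendsto (fun K => ∑' i, d (i + K)) atTop (nhds 0) :=
    tendsto_sum_nat_add d
  have h2 : ∀ᶠ K in atTop, (∑' i, d (i + K)) * M < ε / 2 := by
    have : Tendsto (fun K => (∑' i, d (i + K)) * M) atTop (nhds (0 * M)) :=
      htail.mul_const M
    rw [zero_mul] at this
    exact this.eventually (eventually_lt_nhds (by linarith))
  obtain ⟨K, hK⟩ := h2.exists
  -- head control
  have hhead : Tendsto (fun n => ∑ k ∈ Finset.range K, d k * g k n) atTop (nhds 0) := by
    have := tendsto_finset_sum (Finset.range K)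
      (fun k _ => ((hgk k).const_mul (d k)))
    simpa using this
  rw [Metric.tendsto_atTop] at hhead
  obtain ⟨N, hN⟩ := hhead (ε/2) (by linarith)
  refine ⟨max N K, fun n hn => ?_⟩
  have hnN : N ≤ n := le_trans (le_max_left _ _) hn
  have hnK : K ≤ n := le_trans (le_max_right _ _) hn
  have hsplit : ∑ k ∈ Finset.range n, d k * g k n
      = (∑ k ∈ Finset.range K, d k * g k n) + ∑ k ∈ Finset.Ico K n, d k * g k n := by
    simp only [Finset.range_eq_Ico]
    exact (Finset.sum_Ico_consecutive _ (Nat.zero_le K) hnK).symm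
  have hmid : ∑ k ∈ Finset.Ico K n, d k * g k n ≤ (∑' i, d (i + K)) * M := by
    calc ∑ k ∈ Finset.Ico K n, d k * g k n
        ≤ ∑ k ∈ Finset.Ico K n, d k * M := by
          refine Finset.sum_le_sum fun k hk => ?_
          exact mul_le_mul_of_nonneg_left
            (hgM k n (Finset.mem_Ico.mp hk).2) (hd k)
      _ = (∑ k ∈ Finset.Ico K n, d k) * M := by rw [Finset.sum_mul]
      _ ≤ (∑' i, d (i + K)) * M := by
          refine mul_le_mul_of_nonneg_right ?_ hM
          have : ∑ k ∈ Finset.Ico K n, d k = ∑ i ∈ Finset.range (n - K), d (i + K) := by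
            rw [Finset.sum_Ico_eq_sum_range]
            exact Finset.sum_congr rfl fun i _ => by rw [add_comm]
          rw [this]
          exact Summable.sum_le_tsum _ (fun i _ => hd _) ((summable_nat_add_iff K).mpr hsum)
  have hheadb := hN n hnN
  rw [Real.dist_eq, sub_zero] at hheadb ⊢
  have hnn : 0 ≤ ∑ k ∈ Finset.range n, d k * g k n :=
    Finset.sum_nonneg fun k _ => mul_nonneg (hd k) (hg0 k n)
  rw [abs_of_nonneg hnn]
  have hheadnn : 0 ≤ ∑ k ∈ Finset.range K, d k * g k n :=
    Finset.sum_nonneg fun k _ => mul_nonneg (hd k) (hg0 k n)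
  rw [abs_of_nonneg hheadnn] at hheadb
  rw [hsplit]
  linarith

lemma psimono8' {Ψ : ℝ → ℝ} (hconv : ConvexOn ℝ univ Ψ) (h0 : Ψ 0 = 0)
    (hnn : ∀ u, 0 ≤ Ψ u) : ∀ a b : ℝ, 0 ≤ a → a ≤ b → Ψ a ≤ Ψ b := by
  intro a b ha hab
  rcases eq_or_lt_of_le (ha.trans hab) with hb | hb
  · have : a = 0 := le_antisymm (hab.trans hb.symm.le) ha
    rw [this, ← hb]
  · have hθ : a / b ∈ Icc (0:ℝ) 1 := ⟨div_nonneg ha hb.le, (div_le_one hb).mpr hab⟩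
    have := hconv.2 (mem_univ (0:ℝ)) (mem_univ b) (by linarith [hθ.2] : (0:ℝ) ≤ 1 - a/b)
      hθ.1 (by ring)
    simp only [smul_eq_mul, mul_zero, zero_add, h0, mul_zero, zero_add] at this
    have hab' : a / b * b = a := div_mul_cancel₀ a hb.ne'
    rw [hab'] at this
    calc Ψ a ≤ (1 - a/b) * 0 + a/b * Ψ b := by simpa [h0] using this
      _ = a/b * Ψ b := by ring
      _ ≤ 1 * Ψ b := mul_le_mul_of_nonneg_right hθ.2 (hnn b)
      _ = Ψ b := one_mul _

lemma jensen8 {Ψ : ℝ → ℝ} (hconv : ConvexOn ℝ univ Ψ) {w : ℝ → ℝ} {a b : ℝ}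
    (hab : a < b) (hw : IntervalIntegrable w volume a b)
    (hΨw : IntervalIntegrable (fun t => Ψ (w t)) volume a b) :
    Ψ ((b - a)⁻¹ * ∫ t in a..b, w t) ≤ (b - a)⁻¹ * ∫ t in a..b, Ψ (w t) := by
  set μ := volume.restrict (Ioc a b) with hμdef
  have hμuniv : μ univ = ENNReal.ofReal (b - a) := by
    rw [hμdef, Measure.restrict_apply_univ, Real.volume_Ioc]
  haveI : IsFiniteMeasure μ := ⟨by rw [hμuniv]; exact ENNReal.ofReal_lt_top⟩
  haveI : NeZero μ := ⟨by
    rw [← Measure.measure_univ_ne_zero, hμuniv]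
    simpa using sub_pos.mpr hab⟩
  have hcont : ContinuousOn Ψ univ := hconv.continuousOn isOpen_univ
  have hint1 : Integrable w μ := hw.1
  have hint2 : Integrable (Ψ ∘ w) μ := hΨw.1
  have key := hconv.map_average_le hcont isClosed_univ
    (Filter.Eventually.of_forall fun _ => mem_univ _) hint1 hint2
  rw [average_eq, average_eq] at key
  rw [measureReal_def, hμuniv, ENNReal.toReal_ofReal (by linarith : (0:ℝ) ≤ b - a)] at key
  have h1 : ∫ x, w x ∂μ = ∫ t in a..b, w t := by
    rw [intervalIntegral.integral_of_le hab.le]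
  have h2 : ∫ x, Ψ (w x) ∂μ = ∫ t in a..b, Ψ (w t) := by
    rw [intervalIntegral.integral_of_le hab.le]
  rw [h1, h2] at key
  simpa [smul_eq_mul] using key

lemma psile8 {Ψ q : ℝ → ℝ} (hconv : ConvexOn ℝ univ Ψ) (h0 : Ψ 0 = 0)
    (hq : ∀ s > (0:ℝ), HasDerivWithinAt Ψ (q s) (Iic s) s) :
    ∀ s : ℝ, 0 < s → Ψ s ≤ s * q s := by
  intro s hs
  have := hconv.slope_le_of_hasDerivWithinAt_Iio (mem_univ (0:ℝ)) (mem_univ s) hs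
    ((hq s hs).mono Iio_subset_Iic_self)
  rw [slope_def_field, h0, sub_zero, sub_zero, div_le_iff₀ hs] at this
  linarith

lemma strict8 {Ψ : ℝ → ℝ} (hconv : ConvexOn ℝ univ Ψ) (h0 : Ψ 0 = 0)
    (hnn : ∀ u, 0 ≤ Ψ u) (hzero : ∀ u, Ψ u = 0 ↔ u = 0) :
    ∀ u v : ℝ, 0 ≤ u → u < v → Ψ u < Ψ v := by
  intro u v hu huv
  have hv : 0 < v := hu.trans_lt huv
  have hΨv : 0 < Ψ v := lt_of_le_of_ne (hnn v) fun h => hv.ne' ((hzero v).mp h.symm)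
  have hθ : u / v ∈ Icc (0:ℝ) 1 := ⟨div_nonneg hu hv.le, (div_le_one hv).mpr huv.le⟩
  have h2 := hconv.2 (mem_univ (0:ℝ)) (mem_univ v) (by linarith [hθ.2] : (0:ℝ) ≤ 1 - u/v)
    hθ.1 (by ring)
  simp only [smul_eq_mul, mul_zero, zero_add, h0] at h2
  rw [div_mul_cancel₀ u hv.ne'] at h2
  have hlt : u / v < 1 := (div_lt_one hv).mpr huv
  calc Ψ u ≤ (1 - u/v) * 0 + u/v * Ψ v := by simpa [h0] using h2
    _ = u/v * Ψ v := by ring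
    _ < 1 * Ψ v := by exact mul_lt_mul_of_pos_right hlt hΨv
    _ = Ψ v := one_mul _

lemma integ8 {Ψ : ℝ → ℝ} (hconv : ConvexOn ℝ univ Ψ) (h0 : Ψ 0 = 0)
    (hnn : ∀ u, 0 ≤ Ψ u) (hzero : ∀ u, Ψ u = 0 ↔ u = 0)
    (hbig : Tendsto (fun u => Ψ u / u) atTop atTop)
    {w : ℝ → ℝ} {a b : ℝ} (hab : a ≤ b)
    (hint : IntervalIntegrable (fun t => Ψ |w t|) volume a b) :
    IntervalIntegrable (fun t => |w t|) volume a b := by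
  have hmono := psimono8' hconv h0 hnn
  have hsm := strict8 hconv h0 hnn hzero
  -- Ψ tends to atTop
  have hΨtop : Tendsto Ψ atTop atTop := by
    rw [tendsto_atTop]
    intro C
    filter_upwards [hbig.eventually_ge_atTop (max C 0), eventually_ge_atTop (1:ℝ)]
      with u h1 h2
    have hu : (0:ℝ) < u := lt_of_lt_of_le zero_lt_one h2
    have h3 : Ψ u / u * u = Ψ u := div_mul_cancel₀ _ hu.ne'
    nlinarith [le_max_left C (0:ℝ), le_max_right C (0:ℝ)]
  -- inverse function
  set inv : ℝ → ℝ := fun y => sInf {u : ℝ | 0 ≤ u ∧ y ≤ Ψ u} with hinvdef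
  have hne : ∀ y : ℝ, {u : ℝ | 0 ≤ u ∧ y ≤ Ψ u}.Nonempty := fun y => by
    obtain ⟨u, hu1, hu2⟩ := ((hΨtop.eventually_ge_atTop y).and (eventually_ge_atTop (0:ℝ))).exists
    exact ⟨u, hu2, hu1⟩
  have hbdd : ∀ y : ℝ, BddBelow {u : ℝ | 0 ≤ u ∧ y ≤ Ψ u} := fun y => ⟨0, fun u hu => hu.1⟩
  have hinvmono : Monotone inv := fun y₁ y₂ h =>
    csInf_le_csInf (hbdd _) (hne _) fun u hu => ⟨hu.1, h.trans hu.2⟩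
  have hinvΨ : ∀ v : ℝ, 0 ≤ v → inv (Ψ v) = v := by
    intro v hv
    have hset : {u : ℝ | 0 ≤ u ∧ Ψ v ≤ Ψ u} = Ici v := by
      ext u
      constructor
      · rintro ⟨hu0, hu⟩
        by_contra h
        exact absurd hu (not_le.mpr (hsm u v hu0 (lt_of_not_ge h)))
      · intro hu
        exact ⟨hv.trans hu, hmono v u hv hu⟩
    show sInf {u : ℝ | 0 ≤ u ∧ Ψ v ≤ Ψ u} = v
    rw [hset, csInf_Ici]
  -- measurability
  have hIoc : Set.uIoc a b = Ioc a b := uIoc_of_le hab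
  have h1m : AEMeasurable (fun t => Ψ |w t|) (volume.restrict (Set.uIoc a b)) := by
    rw [hIoc]
    exact hint.aestronglyMeasurable.aemeasurable
  have hmeas : AEStronglyMeasurable (fun t => |w t|) (volume.restrict (Set.uIoc a b)) := by
    have h2 : (fun t : ℝ => |w t|) = fun t => inv (Ψ |w t|) :=
      funext fun t => (hinvΨ _ (abs_nonneg _)).symm
    rw [h2]
    exact (hinvmono.measurable.comp_aemeasurable h1m).aestronglyMeasurable
  -- domination
  obtain ⟨u₀, hu₀⟩ := eventually_atTop.mp (hbig.eventually_ge_atTop 1)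
  set C := max u₀ 1 with hC
  have hC1 : (1:ℝ) ≤ C := le_max_right _ _
  have hdom : ∀ t : ℝ, ‖|w t|‖ ≤ ‖C + Ψ |w t|‖ := by
    intro t
    have hΨnn := hnn |w t|
    have hrhs : (0:ℝ) ≤ C + Ψ |w t| := by linarith
    rw [Real.norm_eq_abs, Real.norm_eq_abs, abs_abs, abs_of_nonneg hrhs]
    rcases le_or_gt (|w t|) C with h | h
    · linarith
    · have hwpos : (0:ℝ) < |w t| := lt_of_lt_of_le (by linarith) h.le
      have := hu₀ (|w t|) (le_trans (le_max_left _ _) h.le)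
      have h3 : Ψ (|w t|) / |w t| * |w t| = Ψ (|w t|) := div_mul_cancel₀ _ hwpos.ne'
      nlinarith
  exact (intervalIntegrable_const.add hint).mono_fun hmeas (Eventually.of_forall hdom)

/-- at an `L^Ψ`-point `x` of a 2π-periodic `f` with
`∫_0^π Ψ(|φ_x|) < ∞`, one has
`Σ_{k=0}^{n} Ψ(1/(k+1)) Ψ(((n+1)/π)∫_{Δ_k^n}|φ_x|) → 0` as `n → ∞`,
where `Δ_k^n = (πk/(n+1), π(k+1)/(n+1))`. -/
theorem statement8
    (Ψ q : ℝ → ℝ)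
    (hΨ : IsNFunction Ψ)
    -- q = Ψ′ is the left derivative of Ψ
    (hq : ∀ s > (0 : ℝ), HasDerivWithinAt Ψ (q s) (Set.Iic s) s)
    -- Σ (k+1)^{-1/2} q(1/(k+1)) < ∞
    (hqsum : Summable (fun k : ℕ => (1 / Real.sqrt ((k : ℝ) + 1)) * q (1 / ((k : ℝ) + 1))))
    -- f is 2π-periodic with ∫_0^π Ψ(|φ_x|) < ∞
    (f : ℝ → ℝ) (hper : Function.Periodic f (2 * π)) (x : ℝ)
    (hφΨint : IntervalIntegrable (fun t => Ψ |phi f x t|) volume 0 π)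
    -- x is an L^Ψ-point of f
    (hLΨpoint : Filter.Tendsto (fun δ => (1 / δ) * ∫ t in (0 : ℝ)..δ, Ψ |phi f x t|)
      (nhdsWithin 0 (Set.Ioi 0)) (nhds 0)) :
    Filter.Tendsto
      (fun n : ℕ =>
        ∑ k ∈ Finset.range (n + 1),
          Ψ (1 / ((k : ℝ) + 1)) *
            Ψ ((((n : ℝ) + 1) / π) *
              ∫ t in (π * (k : ℝ) / ((n : ℝ) + 1))..(π * ((k : ℝ) + 1) / ((n : ℝ) + 1)),
                |phi f x t|))
      Filter.atTop (nhds 0) := by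
  obtain ⟨hΨeven, hconv, hnn, hzero, hsmall, hbig⟩ := hΨ
  have h0 : Ψ 0 = 0 := (hzero 0).mpr rfl
  have hπ : 0 < π := Real.pi_pos
  have hmono := psimono8' hconv h0 hnn
  have habs : IntervalIntegrable (fun t => |phi f x t|) volume 0 π :=
    integ8 hconv h0 hnn hzero hbig hπ.le hφΨint
  set G : ℝ → ℝ := fun δ => ∫ t in (0:ℝ)..δ, Ψ |phi f x t| with hGdef
  set gg : ℝ → ℝ := fun δ => (1/δ) * G δ with hggdef
  have hgg : Tendsto gg (nhdsWithin 0 (Ioi 0)) (nhds 0) := hLΨpoint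
  have hsub : ∀ r s : ℝ, 0 ≤ r → r ≤ π → 0 ≤ s → s ≤ π → uIcc r s ⊆ uIcc 0 π := by
    intro r s h1 h2 h3 h4
    apply uIcc_subset_uIcc <;> rw [uIcc_of_le hπ.le] <;> exact ⟨‹_›, ‹_›⟩
  have hGnn : ∀ δ : ℝ, 0 ≤ δ → 0 ≤ G δ := fun δ hδ =>
    intervalIntegral.integral_nonneg hδ fun u _ => hnn _
  have hggnn : ∀ δ : ℝ, 0 < δ → 0 ≤ gg δ := fun δ hδ =>
    mul_nonneg (by positivity) (hGnn δ hδ.le)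
  have hGdiff : ∀ r s : ℝ, 0 ≤ r → r ≤ s → s ≤ π →
      G s - G r = ∫ t in r..s, Ψ |phi f x t| := by
    intro r s h1 h2 h3
    have hi1 : IntervalIntegrable (fun t => Ψ |phi f x t|) volume 0 r :=
      hφΨint.mono_set (hsub 0 r le_rfl hπ.le h1 (h2.trans h3))
    have hi2 : IntervalIntegrable (fun t => Ψ |phi f x t|) volume r s :=
      hφΨint.mono_set (hsub r s h1 (h2.trans h3) (h1.trans h2) h3)
    have := intervalIntegral.integral_add_adjacent_intervals hi1 hi2
    simp only [hGdef]
    linarith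
  have hGmono : ∀ r s : ℝ, 0 ≤ r → r ≤ s → s ≤ π → G r ≤ G s := by
    intro r s h1 h2 h3
    have h4 := hGdiff r s h1 h2 h3
    have h5 : 0 ≤ ∫ t in r..s, Ψ |phi f x t| :=
      intervalIntegral.integral_nonneg h2 fun u _ => hnn _
    linarith
  -- bound M for gg on (0, π]
  obtain ⟨M, hM0, hggM⟩ : ∃ M : ℝ, 0 ≤ M ∧ ∀ δ : ℝ, 0 < δ → δ ≤ π → gg δ ≤ M := by
    have h1 : ∀ᶠ δ in nhdsWithin (0:ℝ) (Ioi 0), gg δ < 1 :=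
      hgg.eventually (eventually_lt_nhds zero_lt_one)
    rw [eventually_nhdsWithin_iff, Metric.eventually_nhds_iff] at h1
    obtain ⟨ε, hε, h1⟩ := h1
    set δ₁ := min ε π with hδ₁def
    have hδ₁ : 0 < δ₁ := lt_min hε hπ
    refine ⟨max 1 ((1/δ₁) * G π), le_trans zero_le_one (le_max_left _ _), ?_⟩
    intro δ hδ hδπ
    rcases lt_or_ge δ δ₁ with h | h
    · have hd1 : dist δ 0 < ε := by
        rw [Real.dist_eq, sub_zero, abs_of_pos hδ]
        exact lt_of_lt_of_le h (min_le_left _ _)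
      exact le_trans (h1 hd1 hδ).le (le_max_left _ _)
    · refine le_trans ?_ (le_max_right _ _)
      have hGδ : G δ ≤ G π := hGmono δ π hδ.le hδπ le_rfl
      have h1δ : 1/δ ≤ 1/δ₁ := one_div_le_one_div_of_le hδ₁ h
      calc gg δ = (1/δ) * G δ := rfl
        _ ≤ (1/δ₁) * G π :=
          mul_le_mul h1δ hGδ (hGnn δ hδ.le) (by positivity)
  -- the sequences c and d
  set c : ℕ → ℝ := fun k => Ψ (1/((k:ℝ)+1)) with hcdef
  have hcnn : ∀ k, 0 ≤ c k := fun k => hnn _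
  have hq0 : ∀ s : ℝ, 0 < s → 0 ≤ q s := by
    intro s hs
    have h1 := psile8 hconv h0 hq s hs
    have h2 := hnn s
    nlinarith
  have hcle : ∀ k : ℕ, c k ≤ (1/Real.sqrt ((k:ℝ)+1)) * q (1/((k:ℝ)+1)) := by
    intro k
    have hk1 : (0:ℝ) < (k:ℝ)+1 := by positivity
    have hs : (0:ℝ) < 1/((k:ℝ)+1) := by positivity
    have h1 := psile8 hconv h0 hq _ hs
    have hsq : Real.sqrt ((k:ℝ)+1) ≤ (k:ℝ)+1 := by
      nlinarith [Real.sq_sqrt hk1.le, Real.sqrt_nonneg ((k:ℝ)+1),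
        sq_nonneg (Real.sqrt ((k:ℝ)+1) - 1)]
    have h2 : 1/((k:ℝ)+1) ≤ 1/Real.sqrt ((k:ℝ)+1) :=
      one_div_le_one_div_of_le (Real.sqrt_pos.mpr hk1) hsq
    calc c k ≤ (1/((k:ℝ)+1)) * q (1/((k:ℝ)+1)) := h1
      _ ≤ (1/Real.sqrt ((k:ℝ)+1)) * q (1/((k:ℝ)+1)) :=
          mul_le_mul_of_nonneg_right h2 (hq0 _ hs)
  have hcsum : Summable c := Summable.of_nonneg_of_le hcnn hcle hqsum
  have hcanti : ∀ k : ℕ, c (k+1) ≤ c k := by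
    intro k
    apply hmono _ _ (by positivity)
    apply one_div_le_one_div_of_le (by positivity)
    push_cast
    linarith
  set d : ℕ → ℝ := fun k => (c k - c (k+1)) * ((k:ℝ)+1) with hddef
  have hdnn : ∀ k, 0 ≤ d k := fun k =>
    mul_nonneg (sub_nonneg.mpr (hcanti k)) (by positivity)
  have hdsum : Summable d := by
    apply summable_of_sum_range_le (c := ∑' k, c k) hdnn
    intro N
    have hds := dsum8 c N
    have h1 : ∑ k ∈ Finset.range N, c k ≤ ∑' k, c k :=
      Summable.sum_le_tsum _ (fun i _ => hcnn i) hcsum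
    have h2 : 0 ≤ (N:ℝ) * c N := mul_nonneg (by positivity) (hcnn N)
    calc ∑ k ∈ Finset.range N, d k
        = (∑ k ∈ Finset.range N, c k) - (N:ℝ) * c N := hds
      _ ≤ ∑' k, c k := by linarith
  -- upper bound function
  set U : ℕ → ℝ := fun n =>
    Ψ (1/((n:ℝ)+1)) / (1/((n:ℝ)+1)) * (G π / π) +
      ∑ k ∈ Finset.range n, d k * gg (π * ((k:ℝ)+1) / ((n:ℝ)+1)) with hUdef
  have hSU : ∀ n : ℕ,
      (∑ k ∈ Finset.range (n + 1),
        c k * Ψ ((((n : ℝ) + 1) / π) *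
          ∫ t in (π * (k : ℝ) / ((n : ℝ) + 1))..(π * ((k : ℝ) + 1) / ((n : ℝ) + 1)),
            |phi f x t|)) ≤ U n := by
    intro n
    have hn1 : (0:ℝ) < (n:ℝ)+1 := by positivity
    set u : ℕ → ℝ := fun j => (((n:ℝ)+1)/π) * G (π * (j:ℝ)/((n:ℝ)+1)) with hudef
    have hu0 : u 0 = 0 := by
      simp [hudef, hGdef]
    have step1 : ∀ k ∈ Finset.range (n+1),
        c k * Ψ ((((n : ℝ) + 1) / π) *
          ∫ t in (π * (k : ℝ) / ((n : ℝ) + 1))..(π * ((k : ℝ) + 1) / ((n : ℝ) + 1)),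
            |phi f x t|) ≤ c k * (u (k+1) - u k) := by
      intro k hk
      have hkn : k ≤ n := Nat.lt_succ_iff.mp (Finset.mem_range.mp hk)
      have hkn' : (k:ℝ) ≤ (n:ℝ) := Nat.cast_le.mpr hkn
      set A := π * (k : ℝ) / ((n : ℝ) + 1) with hAdef
      set B := π * ((k : ℝ) + 1) / ((n : ℝ) + 1) with hBdef
      have hA0 : 0 ≤ A := by positivity
      have hAB : A < B := by
        rw [hAdef, hBdef, div_lt_div_iff_of_pos_right hn1]
        nlinarith
      have hBπ : B ≤ π := by
        rw [hBdef, div_le_iff₀ hn1]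
        nlinarith
      have hw : IntervalIntegrable (fun t => |phi f x t|) volume A B :=
        habs.mono_set (hsub A B hA0 (hAB.le.trans hBπ) (hA0.trans hAB.le) hBπ)
      have hΨw : IntervalIntegrable (fun t => Ψ |phi f x t|) volume A B :=
        hφΨint.mono_set (hsub A B hA0 (hAB.le.trans hBπ) (hA0.trans hAB.le) hBπ)
      have hj := jensen8 hconv hAB hw hΨw
      have hBA : B - A = π / ((n:ℝ)+1) := by
        rw [hAdef, hBdef]
        field_simp
        ring
      have hinv : (B - A)⁻¹ = ((n:ℝ)+1)/π := by
        rw [hBA, inv_div]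
      rw [hinv] at hj
      have hudiff : u (k+1) - u k = (((n:ℝ)+1)/π) * ∫ t in A..B, Ψ |phi f x t| := by
        have hd2 := hGdiff A B hA0 hAB.le hBπ
        have hcast : ((k+1 : ℕ):ℝ) = (k:ℝ)+1 := by push_cast; ring
        simp only [hudef, hcast, ← hAdef, ← hBdef]
        rw [← mul_sub, hd2]
      rw [hudiff]
      exact mul_le_mul_of_nonneg_left hj (hcnn k)
    calc (∑ k ∈ Finset.range (n + 1),
        c k * Ψ ((((n : ℝ) + 1) / π) *
          ∫ t in (π * (k : ℝ) / ((n : ℝ) + 1))..(π * ((k : ℝ) + 1) / ((n : ℝ) + 1)),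
            |phi f x t|))
        ≤ ∑ k ∈ Finset.range (n+1), c k * (u (k+1) - u k) := Finset.sum_le_sum step1
      _ = c n * u (n+1) + ∑ k ∈ Finset.range n, (c k - c (k+1)) * u (k+1) :=
          abel8 c u n hu0
      _ = U n := by
        rw [hUdef]
        congr 1
        · have hcast : ((n+1 : ℕ):ℝ) = (n:ℝ)+1 := by push_cast; ring
          have hπn : π * ((n:ℝ)+1)/((n:ℝ)+1) = π := by field_simp
          simp only [hudef, hcast, hπn]
          rw [hcdef]
          field_simp
        · apply Finset.sum_congr rfl
          intro k hk
          have hcast : ((k+1 : ℕ):ℝ) = (k:ℝ)+1 := by push_cast; ring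
          simp only [hudef, hddef, hggdef, hcast]
          have hδpos : (0:ℝ) < π * ((k:ℝ)+1)/((n:ℝ)+1) := by positivity
          field_simp
  -- upper bound tends to 0
  have hU0 : Tendsto U atTop (nhds 0) := by
    have h1 : Tendsto (fun n : ℕ => Ψ (1/((n:ℝ)+1)) / (1/((n:ℝ)+1)) * (G π / π))
        atTop (nhds 0) := by
      have ha : Tendsto (fun n : ℕ => 1/((n:ℝ)+1)) atTop (nhdsWithin 0 (Ioi 0)) :=
        tendsto_nhdsWithin_of_tendsto_nhds_of_eventually_within _
          tendsto_one_div_add_atTop_nhds_zero_nat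
          (Eventually.of_forall fun n => mem_Ioi.mpr (by positivity))
      have hb := hsmall.comp ha
      have hc2 := hb.mul_const (G π / π)
      simpa using hc2
    have h2 : Tendsto (fun n : ℕ =>
        ∑ k ∈ Finset.range n, d k * gg (π * ((k:ℝ)+1) / ((n:ℝ)+1))) atTop (nhds 0) := by
      have hδpos : ∀ k n : ℕ, (0:ℝ) < π * ((k:ℝ)+1) / ((n:ℝ)+1) := fun k n =>
        div_pos (mul_pos Real.pi_pos (by positivity)) (by positivity)
      refine sumtend8 d hdnn hdsum
        (fun k n => gg (π * ((k:ℝ)+1) / ((n:ℝ)+1)))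
        (fun k n => hggnn _ (hδpos k n)) M hM0 (fun k n hkn => ?_) (fun k => ?_)
      · apply hggM _ (hδpos k n)
        rw [div_le_iff₀ (by positivity : (0:ℝ) < (n:ℝ)+1)]
        have hle : (k:ℝ)+1 ≤ (n:ℝ)+1 := by
          have : (k:ℝ) ≤ (n:ℝ) := Nat.cast_le.mpr hkn.le
          linarith
        nlinarith
      · apply hgg.comp
        apply tendsto_nhdsWithin_of_tendsto_nhds_of_eventually_within
        · have := tendsto_one_div_add_atTop_nhds_zero_nat.const_mul (π * ((k:ℝ)+1))
          rw [mul_zero] at this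
          convert this using 2 with n
          rw [mul_one_div]
        · exact Eventually.of_forall fun n => mem_Ioi.mpr (hδpos k n)
    have := h1.add h2
    rw [add_zero] at this
    exact this
  -- squeeze
  have hS0 : ∀ n : ℕ, 0 ≤ ∑ k ∈ Finset.range (n + 1),
      c k * Ψ ((((n : ℝ) + 1) / π) *
        ∫ t in (π * (k : ℝ) / ((n : ℝ) + 1))..(π * ((k : ℝ) + 1) / ((n : ℝ) + 1)),
          |phi f x t|) := fun n =>
    Finset.sum_nonneg fun k _ => mul_nonneg (hcnn k) (hnn _)
  exact squeeze_zero hS0 hSU hU0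
end
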